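/- Let p be a prime, g ∈ K_p, and n ≥ 1. Let k be the p-adic valuation of n (the largest k with p^k dividing n). Then the function f_n ∘ g⁻¹ − f_n − α_k(g) · f_{n−1} belongs to the ZMod p-linear span of {f_0, …, f_{n−2}} (interpreted as the zero subspace when n = 1). In other words, the entries s_1, s_2, … of the first diagonal above the main diagonal of the uni-triangular matrix of g in the ordered basis (f_0, f_1, f_2, …) are given by s_n = α_{v_p(n)}(g). -/

import Mathlib

/-- The triangular-form predicate defining the group `K_p`. -/
def IsTriangular (p : ℕ) (g : Equiv.Perm (ℕ → ZMod p)) : Prop :=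
  ∃ a : (n : ℕ) → (Fin n → ZMod p) → ZMod p,
    ∀ (x : ℕ → ZMod p) (n : ℕ), g x n = x n + a n (fun i : Fin n => x (i : ℕ))

/-- Extend a word `v ∈ (ZMod p)^n` to an infinite sequence by zeros. -/
def extendWord {p : ℕ} (n : ℕ) (v : Fin n → ZMod p) : ℕ → ZMod p :=
  fun i => if h : i < n then v ⟨i, h⟩ else 0

/-- `α_n(g) = Σ_{v ∈ (ZMod p)^n} a_n(v)`, computed from the action of `g`
(for triangular `g`, `a_n(v) = (g x̂)_n − x̂_n` for any extension `x̂` of `v`). -/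
noncomputable def alphaKal (p : ℕ) [NeZero p] (g : Equiv.Perm (ℕ → ZMod p)) (n : ℕ) :
    ZMod p :=
  ∑ v : Fin n → ZMod p, (g (extendWord n v) n - extendWord n v n)

/-- The indicator function `δ_0 : ZMod p → ZMod p` of `0`. -/
def delta0 (p : ℕ) : ZMod p → ZMod p := fun x => if x = 0 then 1 else 0

/-- The operator `S − 1` where `S` is the shift `(S f)(x) = f (x − 1)`. -/
def shiftDiff (p : ℕ) (f : ZMod p → ZMod p) : ZMod p → ZMod p :=
  fun x => f (x - 1) - f x

/-- `b_k = (S − 1)^{p−1−k} (δ_0)` for `0 ≤ k ≤ p − 1`. -/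
def bFun (p k : ℕ) : ZMod p → ZMod p :=
  (shiftDiff p)^[p - 1 - k] (delta0 p)

/-- `f_n(x) = Π_i b_{k_i}(x_i)`, where `k_0, k_1, …` are the base-`p` digits of `n`
(digits with `i > n` vanish and contribute the factor `b_0 = 1`... the finitely many
possibly nontrivial factors are captured by the range below). -/
def fBasis (p n : ℕ) : (ℕ → ZMod p) → ZMod p :=
  fun x => ∏ i ∈ Finset.range (n + 1), bFun p (n / p ^ i % p) (x i)

section PartA
variable {p : ℕ}

lemma neg_one_val [NeZero p] (hp : 1 < p) : (-1 : ZMod p).val = p - 1 := by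
  have h1 : ((p - 1 : ℕ) : ZMod p) = -1 := by
    have : ((p : ℕ) : ZMod p) = 0 := ZMod.natCast_self p
    push_cast [Nat.cast_sub hp.le]
    rw [this]; ring
  rw [← h1, ZMod.val_cast_of_lt (by omega)]

lemma val_sub_one [NeZero p] {x : ZMod p} (hx : x ≠ 0) : (x - 1).val = x.val - 1 := by
  have hv : x.val ≠ 0 := fun h => hx ((ZMod.val_eq_zero x).mp h)
  have hlt : x.val < p := x.val_lt
  have hx' : ((x.val : ℕ) : ZMod p) = x := ZMod.natCast_zmod_val x
  have h1 : x - 1 = ((x.val - 1 : ℕ) : ZMod p) := by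
    push_cast [Nat.cast_sub (by omega : 1 ≤ x.val)]
    rw [hx']
  rw [h1, ZMod.val_cast_of_lt (by omega)]

lemma iter_formula (hp : p.Prime) [NeZero p] :
    ∀ j, j ≤ p - 1 → ∀ x : ZMod p,
      (shiftDiff p)^[j] (delta0 p) x = (-1 : ZMod p) ^ (j + x.val) * (j.choose x.val : ZMod p) := by
  intro j
  induction j with
  | zero =>
    intro _ x
    by_cases hx : x = 0
    · subst hx; simp [delta0]
    · have hv : x.val ≠ 0 := fun h => hx ((ZMod.val_eq_zero x).mp h)
      simp [delta0, hx, Nat.choose_eq_zero_of_lt (by omega : 0 < x.val)]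
  | succ j IH =>
    intro hj x
    have hj' : j ≤ p - 1 := by omega
    rw [Function.iterate_succ_apply']
    show (shiftDiff p)^[j] (delta0 p) (x - 1) - (shiftDiff p)^[j] (delta0 p) x = _
    by_cases hx : x = 0
    · subst hx
      have h1 : ((0 : ZMod p) - 1).val = p - 1 := by
        rw [zero_sub]; exact neg_one_val hp.one_lt
      rw [IH hj' _, IH hj' _, h1, ZMod.val_zero]
      rw [Nat.choose_eq_zero_of_lt (by omega : j < p - 1)]
      simp [pow_succ]
    · have h1 : (x - 1).val = x.val - 1 := val_sub_one hx
      have hv : x.val ≠ 0 := fun h => hx ((ZMod.val_eq_zero x).mp h)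
      obtain ⟨t, ht⟩ : ∃ t, x.val = t + 1 := ⟨x.val - 1, by omega⟩
      rw [IH hj' _, IH hj' _, h1, ht]
      have h2 : t + 1 - 1 = t := rfl
      rw [h2, Nat.choose_succ_succ j t]
      push_cast
      ring_nf
      rw [Nat.add_comm 1 t, Nat.succ_eq_add_one]
  end PartA

section PartA2
variable {p : ℕ}

lemma bFun_formula (hp : p.Prime) [NeZero p] {j : ℕ} (hj : j ≤ p - 1) (x : ZMod p) :
    bFun p (p - 1 - j) x = (-1 : ZMod p) ^ (j + x.val) * (j.choose x.val : ZMod p) := by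
  have h : p - 1 - (p - 1 - j) = j := by omega
  rw [bFun, h]; exact iter_formula hp j hj x

lemma choose_p_sub_one (hp : p.Prime) :
    ∀ v, v ≤ p - 1 → (((p - 1).choose v : ℕ) : ZMod p) = (-1 : ZMod p) ^ v := by
  intro v
  induction v with
  | zero => intro _; simp
  | succ v IH =>
    intro hv
    have hdvd : p ∣ p.choose (v + 1) := hp.dvd_choose_self (by omega) (by omega)
    have h1 : ((p : ℕ).choose (v + 1) : ZMod p) = 0 :=
      (ZMod.natCast_eq_zero_iff _ _).mpr hdvd
    have h2 : (p - 1) + 1 = p := by have := hp.one_lt; omega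
    have h3 := Nat.choose_succ_succ (p - 1) v
    simp only [Nat.succ_eq_add_one] at h3
    rw [h2] at h3
    have : (((p-1).choose v : ℕ) : ZMod p) + (((p-1).choose (v+1) : ℕ) : ZMod p) = 0 := by
      rw [← Nat.cast_add, ← h3, h1]
    rw [IH (by omega)] at this
    rw [pow_succ]
    linear_combination this - (-1:ZMod p)^v * 1

lemma bFun_zero_eq_one (hp : p.Prime) [NeZero p] : bFun p 0 = fun _ => (1 : ZMod p) := by
  funext x
  have h0 : p - 1 - (p - 1) = 0 := by omega
  have := bFun_formula hp (le_refl (p - 1)) x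
  rw [h0] at this
  rw [this, choose_p_sub_one hp x.val (by have := x.val_lt; omega)]
  rw [← pow_add]
  have : (p - 1) + x.val + x.val = (p-1) + 2 * x.val := by ring
  rw [this, pow_add, pow_mul]
  simp only [neg_one_sq, one_pow, mul_one]
  rcases hp.eq_two_or_odd' with h2 | hodd
  · subst h2; decide
  · have : Even (p - 1) := Nat.Odd.sub_odd hodd odd_one
    exact this.neg_one_pow

lemma shiftDiff_bFun (hp : p.Prime) {k : ℕ} (h1 : 1 ≤ k) (hk : k ≤ p - 1) :
    shiftDiff p (bFun p k) = bFun p (k - 1) := by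
  have h : p - 1 - (k - 1) = (p - 1 - k) + 1 := by omega
  rw [bFun, bFun, h, Function.iterate_succ_apply']

lemma shiftDiff_bFun_zero (hp : p.Prime) [NeZero p] : shiftDiff p (bFun p 0) = 0 := by
  rw [bFun_zero_eq_one hp]; funext x; simp [shiftDiff]

lemma sum_shiftDiff [NeZero p] (f : ZMod p → ZMod p) : ∑ x, shiftDiff p f x = 0 := by
  have : ∑ x : ZMod p, f (x - 1) = ∑ x : ZMod p, f x :=
    Fintype.sum_equiv (Equiv.subRight (1 : ZMod p)) _ _ (fun x => rfl)
  simp [shiftDiff, Finset.sum_sub_distrib, this]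

lemma sum_bFun_last [NeZero p] : ∑ x, bFun p (p - 1) x = 1 := by
  have h : p - 1 - (p - 1) = 0 := by omega
  rw [bFun, h]
  simp [delta0, Finset.sum_ite_eq']

lemma sum_bFun [NeZero p] (hp : p.Prime) {k : ℕ} (hk : k + 1 ≤ p - 1) :
    ∑ x, bFun p k x = 0 := by
  have : bFun p k = shiftDiff p (bFun p (k + 1)) := by
    rw [shiftDiff_bFun hp (by omega) (by omega)]; simp
  rw [this, sum_shiftDiff]

end PartA2

section PartA3
variable {p : ℕ}

/-- generic helper: push a span membership through a linear map into a submodule -/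
lemma map_span_mem {R M N : Type*} [CommSemiring R] [AddCommMonoid M] [AddCommMonoid N]
    [Module R M] [Module R N] (f : M →ₗ[R] N) {s : Set M} {w : M}
    (hw : w ∈ Submodule.span R s) {T : Submodule R N} (hs : ∀ u ∈ s, f u ∈ T) :
    f w ∈ T := by
  have h1 : f w ∈ Submodule.map f (Submodule.span R s) := Submodule.mem_map_of_mem hw
  rw [Submodule.map_span] at h1
  exact Submodule.span_le.mpr (fun v hv => by obtain ⟨u, hu, rfl⟩ := hv; exact hs u hu) h1

def dFun (p : ℕ) (y : ZMod p) : ZMod p → ZMod p := fun x => if x = y then 1 else 0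

lemma dFun_mem_span (hp : p.Prime) [NeZero p] (y : ZMod p) :
    dFun p y ∈ Submodule.span (ZMod p) (bFun p '' {k | k + 1 ≤ p}) := by
  suffices H : ∀ j, ∀ y : ZMod p, y.val = j →
      dFun p y ∈ Submodule.span (ZMod p) (bFun p '' {k | k + 1 ≤ p}) from H y.val y rfl
  intro j
  induction j using Nat.strong_induction_on with
  | _ j IH =>
  intro y hN
  subst hN
  have hjp : y.val < p := y.val_lt
  have hb := fun x => bFun_formula hp (by omega : y.val ≤ p - 1) x
  have hself : bFun p (p - 1 - y.val) y = 1 := by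
    rw [hb y, Nat.choose_self]
    have h2 : y.val + y.val = 2 * y.val := by ring
    rw [h2, pow_mul]
    simp
  have hsum : ∀ u, (∑ x ∈ Finset.univ.erase y, bFun p (p - 1 - y.val) x • dFun p x) u
      = if u = y then 0 else bFun p (p - 1 - y.val) u := by
    intro u
    rw [Finset.sum_apply]
    simp only [Pi.smul_apply, dFun, smul_eq_mul, mul_ite, mul_one, mul_zero]
    rw [Finset.sum_ite_eq]
    by_cases hu : u = y <;> simp [Finset.mem_erase, hu]
  have hrepr : dFun p y = bFun p (p - 1 - y.val) -
      ∑ x ∈ Finset.univ.erase y, bFun p (p - 1 - y.val) x • dFun p x := by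
    funext u
    rw [Pi.sub_apply, hsum u]
    by_cases hu : u = y
    · subst hu; simp [dFun, hself]
    · simp [dFun, hu]
  rw [hrepr]
  refine sub_mem (Submodule.subset_span ⟨p - 1 - y.val, by simp; omega, rfl⟩) ?_
  refine Submodule.sum_mem _ (fun x hx => ?_)
  by_cases hxv : x.val < y.val
  · exact Submodule.smul_mem _ _ (IH x.val hxv x rfl)
  · have hxy : x ≠ y := (Finset.mem_erase.mp hx).1
    have hvne : x.val ≠ y.val := fun h => hxy (by
      rw [← ZMod.natCast_zmod_val x, ← ZMod.natCast_zmod_val y, h])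
    have hzero : bFun p (p - 1 - y.val) x = 0 := by
      rw [hb x, Nat.choose_eq_zero_of_lt (by omega), Nat.cast_zero, mul_zero]
    rw [hzero, zero_smul]
    exact zero_mem _

lemma fun_eq_sum_dFun [NeZero p] (φ : ZMod p → ZMod p) :
    φ = ∑ y : ZMod p, φ y • dFun p y := by
  funext u
  rw [Finset.sum_apply]
  simp only [Pi.smul_apply, dFun, smul_eq_mul, mul_ite, mul_one, mul_zero]
  rw [Finset.sum_ite_eq]
  simp

lemma mem_span_bFun (hp : p.Prime) [NeZero p] (φ : ZMod p → ZMod p) :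
    φ ∈ Submodule.span (ZMod p) (bFun p '' {k | k + 1 ≤ p}) := by
  rw [fun_eq_sum_dFun φ]
  exact Submodule.sum_mem _ (fun y _ => Submodule.smul_mem _ _ (dFun_mem_span hp y))

/-- the linear "sum" projection map -/
noncomputable def projL (p : ℕ) [NeZero p] : (ZMod p → ZMod p) →ₗ[ZMod p] (ZMod p → ZMod p) where
  toFun φ := φ - (∑ y, φ y) • bFun p (p - 1)
  map_add' f g := by
    simp only [Pi.add_apply, Finset.sum_add_distrib, add_smul]
    abel
  map_smul' c f := by
    simp only [Pi.smul_apply, smul_eq_mul, ← Finset.mul_sum, RingHom.id_apply]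
    funext u
    simp [mul_comm, mul_assoc, mul_sub]

lemma sub_sum_smul_mem (hp : p.Prime) [NeZero p] (φ : ZMod p → ZMod p) :
    φ - (∑ y, φ y) • bFun p (p - 1) ∈
      Submodule.span (ZMod p) (bFun p '' {k | k + 2 ≤ p}) := by
  have h1 : projL p φ ∈ Submodule.span (ZMod p) (bFun p '' {k | k + 2 ≤ p}) := by
    refine map_span_mem (projL p) (mem_span_bFun hp φ) ?_
    rintro u ⟨k, hk, rfl⟩
    simp only [Set.mem_setOf_eq] at hk
    by_cases hkp : k = p - 1
    · subst hkp
      have : projL p (bFun p (p-1)) = 0 := by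
        show bFun p (p-1) - (∑ y, bFun p (p-1) y) • bFun p (p - 1) = 0
        rw [sum_bFun_last, one_smul, sub_self]
      rw [this]; exact zero_mem _
    · have hlt : k + 1 ≤ p - 1 := by have := hp.one_lt; omega
      have : projL p (bFun p k) = bFun p k := by
        show bFun p k - (∑ y, bFun p k y) • bFun p (p - 1) = bFun p k
        rw [sum_bFun hp hlt, zero_smul, sub_zero]
      rw [this]
      exact Submodule.subset_span ⟨k, by simp; omega, rfl⟩
  exact h1

end PartA3

section PartA4
variable {p : ℕ}

def shiftDiffL (p : ℕ) : (ZMod p → ZMod p) →ₗ[ZMod p] (ZMod p → ZMod p) where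
  toFun := shiftDiff p
  map_add' f g := by funext x; simp [shiftDiff]; ring
  map_smul' c f := by funext x; simp [shiftDiff, smul_eq_mul]; ring

lemma shiftDiff_span_stable (hp : p.Prime) [NeZero p] {K : ℕ} (hK : K ≤ p) {w : ZMod p → ZMod p}
    (hw : w ∈ Submodule.span (ZMod p) (bFun p '' {j | j + 2 ≤ K})) :
    shiftDiff p w ∈ Submodule.span (ZMod p) (bFun p '' {j | j + 2 ≤ K}) := by
  refine map_span_mem (shiftDiffL p) hw ?_
  rintro u ⟨j, hj, rfl⟩
  simp only [Set.mem_setOf_eq] at hj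
  rcases Nat.eq_zero_or_pos j with hj0 | hj1
  · subst hj0
    show shiftDiff p (bFun p 0) ∈ _
    rw [shiftDiff_bFun_zero hp]
    exact zero_mem _
  · show shiftDiff p (bFun p j) ∈ _
    rw [shiftDiff_bFun hp hj1 (by omega)]
    exact Submodule.subset_span ⟨j - 1, by simp; omega, rfl⟩

lemma bFun_translate (hp : p.Prime) [NeZero p] {k : ℕ} (hk1 : 1 ≤ k) (hk : k ≤ p - 1)
    (c : ZMod p) :
    (fun x => bFun p k (x - c)) - bFun p k - c • bFun p (k - 1) ∈
      Submodule.span (ZMod p) (bFun p '' {j | j + 2 ≤ k}) := by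
  suffices H : ∀ m : ℕ,
      (fun x => bFun p k (x - (m : ZMod p))) - bFun p k - (m : ZMod p) • bFun p (k - 1) ∈
        Submodule.span (ZMod p) (bFun p '' {j | j + 2 ≤ k}) by
    have := H c.val
    rwa [ZMod.natCast_zmod_val c] at this
  intro m
  induction m with
  | zero => simp
  | succ m IH =>
    set W := Submodule.span (ZMod p) (bFun p '' {j | j + 2 ≤ k}) with hW
    set w := (fun x => bFun p k (x - (m : ZMod p))) - bFun p k - (m : ZMod p) • bFun p (k - 1)
      with hw
    have hTw : shiftDiff p w ∈ W := shiftDiff_span_stable hp (by omega) IH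
    have hTb1 : shiftDiff p (bFun p (k - 1)) ∈ W := by
      rcases Nat.eq_or_lt_of_le hk1 with h1 | h1
      · rw [show k - 1 = 0 by omega, shiftDiff_bFun_zero hp]; exact zero_mem _
      · rw [shiftDiff_bFun hp (by omega) (by omega)]
        exact Submodule.subset_span ⟨k - 1 - 1, by simp; omega, rfl⟩
    have hTbk : shiftDiff p (bFun p k) = bFun p (k - 1) := shiftDiff_bFun hp hk1 hk
    have h4 : ∀ u, bFun p (k - 1) u = bFun p k (u - 1) - bFun p k u := fun u => by
      rw [← hTbk]; rfl
    have key : (fun x => bFun p k (x - ((m + 1 : ℕ) : ZMod p))) - bFun p k -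
        ((m + 1 : ℕ) : ZMod p) • bFun p (k - 1)
        = w + (m : ZMod p) • shiftDiff p (bFun p (k - 1)) + shiftDiff p w := by
      funext x
      simp only [hw, shiftDiff, Pi.add_apply, Pi.sub_apply, Pi.smul_apply, smul_eq_mul]
      simp only [h4]
      have hx1 : x - ((m + 1 : ℕ) : ZMod p) = x - 1 - (m : ZMod p) := by push_cast; ring
      have hx2 : x - (m : ZMod p) - 1 = x - 1 - (m : ZMod p) := by ring
      rw [hx1]
      push_cast
      ring
    rw [key]
    exact add_mem (add_mem IH (Submodule.smul_mem _ _ hTb1)) hTw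
end PartA4

section PartB
variable {p : ℕ}

def tailSeq {p : ℕ} (x : ℕ → ZMod p) : ℕ → ZMod p := fun i => x (i + 1)

lemma fBasis_zero (hp : p.Prime) [NeZero p] : fBasis p 0 = fun _ => (1 : ZMod p) := by
  funext x
  simp [fBasis, bFun_zero_eq_one hp]

lemma fBasis_decomp (hp : p.Prime) [NeZero p] (n : ℕ) :
    fBasis p n = fun x => bFun p (n % p) (x 0) * fBasis p (n / p) (tailSeq x) := by
  have hp2 := hp.two_le
  rcases Nat.eq_zero_or_pos n with h0 | h1
  · subst h0
    funext x
    simp [fBasis_zero hp, fBasis, Nat.zero_div, bFun_zero_eq_one hp]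
  funext x
  set m := n / p with hm
  have hmn : m + 1 ≤ n := by
    have : m < n := Nat.div_lt_self h1 hp2
    omega
  rw [fBasis, Finset.prod_range_succ']
  have h2 : ∀ i, n / p ^ (i + 1) = m / p ^ i := by
    intro i
    rw [hm, Nat.div_div_eq_div_mul, ← pow_succ']
  have h3 : n / p ^ 0 = n := by simp
  rw [h3]
  have h4 : (∏ i ∈ Finset.range n, bFun p (n / p ^ (i + 1) % p) (x (i + 1)))
      = ∏ i ∈ Finset.range (m + 1), bFun p (m / p ^ i % p) (x (i + 1)) := by
    rw [Finset.prod_congr rfl (fun i _ => by rw [h2 i])]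
    refine (Finset.prod_subset (Finset.range_subset_range.mpr hmn) ?_).symm
    intro i _ hi
    simp only [Finset.mem_range, not_lt] at hi
    have hpi : m < p ^ i := by
      calc m < i + 1 := by omega
      _ ≤ 2 ^ i := Nat.succ_le_of_lt (Nat.lt_two_pow_self (n := i))
      _ ≤ p ^ i := Nat.pow_le_pow_left hp2 i
    rw [Nat.div_eq_of_lt hpi]
    simp [bFun_zero_eq_one hp]
  rw [h4]
  rw [mul_comm]
  rfl

lemma fBasis_decomp' (hp : p.Prime) [NeZero p] {j m : ℕ} (hj : j < p) :
    fBasis p (p * m + j) = fun x => bFun p j (x 0) * fBasis p m (tailSeq x) := by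
  have h1 : (p * m + j) % p = j := by rw [Nat.mul_add_mod, Nat.mod_eq_of_lt hj]
  have h2 : (p * m + j) / p = m := by
    rw [Nat.add_comm, Nat.add_mul_div_left _ _ hp.pos, Nat.div_eq_of_lt hj, Nat.zero_add]
  rw [fBasis_decomp hp (p * m + j), h1, h2]

def mulBasL (p : ℕ) (l : ℕ) : (ZMod p → ZMod p) →ₗ[ZMod p] ((ℕ → ZMod p) → ZMod p) where
  toFun φ := fun x => φ (x 0) * fBasis p l (tailSeq x)
  map_add' f g := by funext x; simp [add_mul]
  map_smul' c f := by funext x; simp [mul_assoc]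

def mulSeqL (p : ℕ) (ψ : ZMod p → ZMod p) :
    ((ℕ → ZMod p) → ZMod p) →ₗ[ZMod p] ((ℕ → ZMod p) → ZMod p) where
  toFun G := fun x => ψ (x 0) * G (tailSeq x)
  map_add' f g := by funext x; simp [mul_add]
  map_smul' c f := by funext x; simp; ring

/-- L5 : an arbitrary head coefficient times f_l of the tail -/
lemma mul_fBasis_mem (hp : p.Prime) [NeZero p] (ψ : ZMod p → ZMod p) {l n : ℕ}
    (h : p * l + p + 1 ≤ n) :
    (fun x => ψ (x 0) * fBasis p l (tailSeq x)) ∈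
      Submodule.span (ZMod p) (fBasis p '' {s | s + 2 ≤ n}) := by
  have hmem := mem_span_bFun hp ψ
  refine map_span_mem (mulBasL p l) hmem ?_
  rintro u ⟨k, hk, rfl⟩
  simp only [Set.mem_setOf_eq] at hk
  have : mulBasL p l (bFun p k) = fBasis p (p * l + k) := by
    rw [fBasis_decomp' hp (by omega : k < p)]; rfl
  rw [this]
  exact Submodule.subset_span ⟨p * l + k, by simp; omega, rfl⟩

end PartB

section PartC
variable {p : ℕ}

def consSeq {p : ℕ} (y : ZMod p) (z : ℕ → ZMod p) : ℕ → ZMod p :=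
  fun n => Nat.casesOn n y z

@[simp] lemma consSeq_zero (y : ZMod p) (z : ℕ → ZMod p) : consSeq y z 0 = y := rfl
@[simp] lemma consSeq_succ (y : ZMod p) (z : ℕ → ZMod p) (n : ℕ) :
    consSeq y z (n + 1) = z n := rfl
@[simp] lemma tailSeq_consSeq (y : ZMod p) (z : ℕ → ZMod p) : tailSeq (consSeq y z) = z := rfl

lemma consSeq_head_tail (x : ℕ → ZMod p) : consSeq (x 0) (tailSeq x) = x := by
  funext n; cases n <;> rfl

def cg {p : ℕ} (g : Equiv.Perm (ℕ → ZMod p)) : ZMod p := g (fun _ => 0) 0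

lemma apply_head {g : Equiv.Perm (ℕ → ZMod p)} (hg : IsTriangular p g) (x : ℕ → ZMod p) :
    g x 0 = x 0 + cg g := by
  obtain ⟨a, ha⟩ := hg
  have h1 := ha x 0
  have h2 := ha (fun _ => 0) 0
  have h3 : (fun i : Fin 0 => x (i : ℕ)) = (fun i : Fin 0 => (fun _ => (0:ZMod p)) (i : ℕ)) :=
    funext fun i => i.elim0
  rw [cg, h2, h1, h3]
  simp

lemma symm_head {g : Equiv.Perm (ℕ → ZMod p)} (hg : IsTriangular p g) (x : ℕ → ZMod p) :
    g.symm x 0 = x 0 - cg g := by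
  have := apply_head hg (g.symm x)
  rw [g.apply_symm_apply] at this
  rw [this]; ring

def tailPerm (p : ℕ) (g : Equiv.Perm (ℕ → ZMod p)) (hg : IsTriangular p g) (y : ZMod p) :
    Equiv.Perm (ℕ → ZMod p) where
  toFun z := tailSeq (g (consSeq y z))
  invFun z := tailSeq (g.symm (consSeq (y + cg g) z))
  left_inv z := by
    have h1 : consSeq (y + cg g) (tailSeq (g (consSeq y z))) = g (consSeq y z) := by
      conv_rhs => rw [← consSeq_head_tail (g (consSeq y z))]
      rw [apply_head hg, consSeq_zero]
    simp only [h1, g.symm_apply_apply, tailSeq_consSeq]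
  right_inv z := by
    have h2 : g.symm (consSeq (y + cg g) z) 0 = y := by
      rw [symm_head hg]; simp
    have h1 : consSeq y (tailSeq (g.symm (consSeq (y + cg g) z)))
        = g.symm (consSeq (y + cg g) z) := by
      conv_rhs => rw [← consSeq_head_tail (g.symm (consSeq (y + cg g) z))]
      rw [h2]
    simp only [h1, g.apply_symm_apply, tailSeq_consSeq]

lemma tailPerm_triangular {g : Equiv.Perm (ℕ → ZMod p)} (hg : IsTriangular p g) (y : ZMod p) :
    IsTriangular p (tailPerm p g hg y) := by
  obtain ⟨a, ha⟩ := id hg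
  refine ⟨fun n v => a (n + 1) (Fin.cons y v), fun z n => ?_⟩
  have h2 : tailPerm p g hg y z n = g (consSeq y z) (n + 1) := rfl
  rw [h2, ha (consSeq y z) (n + 1), consSeq_succ]
  congr 1
  congr 1
  funext i
  refine Fin.cases ?_ (fun j => ?_) i
  · rw [Fin.cons_zero]
    rfl
  · rw [Fin.cons_succ]
    have : ((j.succ : Fin (n + 1)) : ℕ) = (j : ℕ) + 1 := Fin.val_succ j
    rw [this, consSeq_succ]

lemma tailPerm_symm_apply {g : Equiv.Perm (ℕ → ZMod p)} (hg : IsTriangular p g) (y : ZMod p)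
    (z : ℕ → ZMod p) :
    (tailPerm p g hg y).symm z = tailSeq (g.symm (consSeq (y + cg g) z)) := rfl

lemma symm_decomp {g : Equiv.Perm (ℕ → ZMod p)} (hg : IsTriangular p g) (x : ℕ → ZMod p) :
    g.symm x = consSeq (x 0 - cg g) ((tailPerm p g hg (x 0 - cg g)).symm (tailSeq x)) := by
  rw [tailPerm_symm_apply]
  have h1 : x 0 - cg g + cg g = x 0 := by ring
  rw [h1, consSeq_head_tail x]
  conv_lhs => rw [← consSeq_head_tail (g.symm x)]
  rw [symm_head hg]

end PartC

section PartC2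
variable {p : ℕ} [NeZero p]

lemma alpha_zero {g : Equiv.Perm (ℕ → ZMod p)} (hg : IsTriangular p g) :
    alphaKal p g 0 = cg g := by
  rw [alphaKal]
  have h1 : ∀ v : Fin 0 → ZMod p,
      g (extendWord 0 v) 0 - extendWord 0 v 0 = cg g := by
    intro v
    rw [apply_head hg]
    ring
  rw [Finset.sum_congr rfl (fun v _ => h1 v), Finset.sum_const, Finset.card_univ]
  have : Fintype.card (Fin 0 → ZMod p) = 1 := by simp
  rw [this, one_smul]

lemma extendWord_cons (v : ℕ) (y : ZMod p) (w : Fin v → ZMod p) :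
    extendWord (v + 1) (Fin.cons y w) = consSeq y (extendWord v w) := by
  funext n
  cases n with
  | zero =>
    rw [consSeq_zero, extendWord, dif_pos (Nat.succ_pos v)]
    exact @Fin.cons_zero v (fun _ => ZMod p) y w
  | succ n =>
    rw [consSeq_succ, extendWord, extendWord]
    by_cases h : n < v
    · rw [dif_pos (by omega : n + 1 < v + 1), dif_pos h]
      exact @Fin.cons_succ v (fun _ => ZMod p) y w ⟨n, h⟩
    · rw [dif_neg (by omega), dif_neg h]

lemma alpha_succ {g : Equiv.Perm (ℕ → ZMod p)} (hg : IsTriangular p g) (v : ℕ) :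
    alphaKal p g (v + 1) = ∑ y : ZMod p, alphaKal p (tailPerm p g hg y) v := by
  rw [alphaKal]
  have e := Fin.consEquiv (fun _ : Fin (v + 1) => ZMod p)
  rw [← Equiv.sum_comp (Fin.consEquiv (fun _ : Fin (v + 1) => ZMod p))
    (fun u => g (extendWord (v+1) u) (v+1) - extendWord (v+1) u (v+1))]
  rw [Fintype.sum_prod_type]
  refine Finset.sum_congr rfl (fun y _ => ?_)
  rw [alphaKal]
  refine Finset.sum_congr rfl (fun w _ => ?_)
  have h1 : (Fin.consEquiv (fun _ : Fin (v + 1) => ZMod p)) (y, w) = Fin.cons y w := rfl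
  rw [h1, extendWord_cons]
  have h2 : tailPerm p g hg y (extendWord v w) v = g (consSeq y (extendWord v w)) (v + 1) := rfl
  rw [h2]
  have h3 : extendWord v w v = 0 := by rw [extendWord, dif_neg (lt_irrefl v)]
  have h4 : consSeq y (extendWord v w) (v + 1) = extendWord v w v := rfl
  rw [h3, h4, h3]

end PartC2


section Main
variable {p : ℕ}

theorem main_aux (p : ℕ) (hp : p.Prime) [NeZero p] :
    ∀ n, 1 ≤ n → ∀ g : Equiv.Perm (ℕ → ZMod p), IsTriangular p g →
    (fun x => fBasis p n (g.symm x) - fBasis p n x -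
        alphaKal p g (padicValNat p n) * fBasis p (n - 1) x) ∈
      Submodule.span (ZMod p) (fBasis p '' {m : ℕ | m + 2 ≤ n}) := by
  intro n
  induction n using Nat.strong_induction_on with
  | _ n IH =>
  intro hn g hg
  have hp2 := hp.two_le
  have cor : ∀ m, m < n → ∀ g' : Equiv.Perm (ℕ → ZMod p), IsTriangular p g' →
      (fun x => fBasis p m (g'.symm x) - fBasis p m x) ∈
        Submodule.span (ZMod p) (fBasis p '' {l : ℕ | l + 1 ≤ m}) := by
    intro m hm g' hg'
    rcases Nat.eq_zero_or_pos m with h0 | h1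
    · subst h0
      have hzero : (fun x => fBasis p 0 (g'.symm x) - fBasis p 0 x)
          = (0 : (ℕ → ZMod p) → ZMod p) := by
        funext x; rw [fBasis_zero hp]; simp
      rw [hzero]; exact zero_mem _
    · have h2 := IH m hm h1 g' hg'
      have heq : (fun x => fBasis p m (g'.symm x) - fBasis p m x)
          = (fun x => fBasis p m (g'.symm x) - fBasis p m x -
              alphaKal p g' (padicValNat p m) * fBasis p (m - 1) x)
            + alphaKal p g' (padicValNat p m) • fBasis p (m - 1) := by
        funext x
        simp only [Pi.add_apply, Pi.smul_apply, smul_eq_mul]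
        ring
      rw [heq]
      refine add_mem (Submodule.span_mono (Set.image_mono ?_) h2)
        (Submodule.smul_mem _ _ (Submodule.subset_span ⟨m - 1, by simp; omega, rfl⟩))
      intro l hl
      simp only [Set.mem_setOf_eq] at hl ⊢
      omega
  set c := cg g with hc
  set m := n / p with hm
  set r := n % p with hr2
  have hdm : p * m + r = n := Nat.div_add_mod n p
  have hrp : r < p := Nat.mod_lt _ hp.pos
  have hmn : m < n := Nat.div_lt_self hn hp.one_lt
  by_cases hr0 : r = 0
  · -- case p ∣ n
    have hm1 : 1 ≤ m := by
      rcases Nat.eq_zero_or_pos m with h0 | h1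
      · rw [h0, Nat.mul_zero] at hdm; omega
      · exact h1
    have hnpm : n = p * m := by omega
    have hpm1 : p * (m - 1) + p = p * m := by
      conv_rhs => rw [← Nat.succ_pred_eq_of_pos hm1]
      rw [Nat.mul_succ]
      rfl
    have hfact : Fact p.Prime := ⟨hp⟩
    have hvm : padicValNat p n = padicValNat p m + 1 := by
      rw [hnpm, padicValNat.mul hp.ne_zero (by omega : m ≠ 0),
        padicValNat.self hp.one_lt]
      ring
    set v' := padicValNat p m with hv'
    set φ : ZMod p → ZMod p := fun y => alphaKal p (tailPerm p g hg y) v' with hφ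
    set R : ZMod p → ((ℕ → ZMod p) → ZMod p) := fun y => fun z =>
      fBasis p m ((tailPerm p g hg y).symm z) - fBasis p m z - φ y * fBasis p (m - 1) z
      with hR
    have hRmem : ∀ y, R y ∈ Submodule.span (ZMod p) (fBasis p '' {l : ℕ | l + 2 ≤ m}) :=
      fun y => IH m hmn hm1 _ (tailPerm_triangular hg y)
    set lam := ∑ y, φ y with hlamdef
    have hlam : alphaKal p g (padicValNat p n) = lam := by
      rw [hvm, alpha_succ hg v']
    set φ' : ZMod p → ZMod p := fun u => φ (u - c) with hφ'
    have hsumφ' : ∑ u, φ' u = lam := by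
      rw [hlamdef]
      exact Fintype.sum_equiv (Equiv.subRight c) _ _ (fun u => rfl)
    have hW2 := sub_sum_smul_mem hp φ'
    rw [hsumφ'] at hW2
    have hFn : fBasis p n = fun x => fBasis p m (tailSeq x) := by
      have h4 : n = p * m + 0 := by omega
      rw [h4, fBasis_decomp' hp hp.pos, bFun_zero_eq_one hp]
      funext x
      rw [one_mul]
    have hFn1 : fBasis p (n - 1) =
        fun x => bFun p (p - 1) (x 0) * fBasis p (m - 1) (tailSeq x) := by
      have h4 : n - 1 = p * (m - 1) + (p - 1) := by omega
      rw [h4]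
      exact fBasis_decomp' hp (by omega)
    have key : (fun x => fBasis p n (g.symm x) - fBasis p n x -
        alphaKal p g (padicValNat p n) * fBasis p (n - 1) x)
        = (fun x => (φ' (x 0) - lam * bFun p (p - 1) (x 0)) * fBasis p (m - 1) (tailSeq x))
          + (fun x => R (x 0 - c) (tailSeq x)) := by
      funext x
      rw [hlam]
      have h1 : fBasis p n (g.symm x)
          = fBasis p m ((tailPerm p g hg (x 0 - c)).symm (tailSeq x)) := by
        simp only [hFn]
        rw [symm_decomp hg x, tailSeq_consSeq]
      have h2 : R (x 0 - c) (tailSeq x)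
          = fBasis p m ((tailPerm p g hg (x 0 - c)).symm (tailSeq x))
            - fBasis p m (tailSeq x) - φ (x 0 - c) * fBasis p (m - 1) (tailSeq x) := rfl
      rw [Pi.add_apply, h2, h1]
      simp only [hFn, hFn1]
      have h3 : φ' (x 0) = φ (x 0 - c) := rfl
      rw [h3]
      ring
    rw [key]
    refine add_mem ?_ ?_
    · have heq : (fun x => (φ' (x 0) - lam * bFun p (p - 1) (x 0)) * fBasis p (m - 1) (tailSeq x))
          = mulBasL p (m - 1) (φ' - lam • bFun p (p - 1)) := by
        funext x
        show _ = (φ' - lam • bFun p (p - 1)) (x 0) * fBasis p (m - 1) (tailSeq x)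
        rw [Pi.sub_apply, Pi.smul_apply, smul_eq_mul]
      rw [heq]
      refine map_span_mem _ hW2 ?_
      rintro u ⟨j, hj, rfl⟩
      simp only [Set.mem_setOf_eq] at hj
      have h5 : mulBasL p (m - 1) (bFun p j) = fBasis p (p * (m - 1) + j) := by
        rw [fBasis_decomp' hp (by omega : j < p)]
        rfl
      rw [h5]
      refine Submodule.subset_span ⟨p * (m - 1) + j, ?_, rfl⟩
      simp only [Set.mem_setOf_eq]
      omega
    · have hsum : (fun x => R (x 0 - c) (tailSeq x))
          = ∑ y : ZMod p, (fun x => (if x 0 = y then (1 : ZMod p) else 0) * R (y - c) (tailSeq x)) := by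
        funext x
        rw [Finset.sum_apply]
        simp only [ite_mul, one_mul, zero_mul]
        rw [Finset.sum_ite_eq]
        simp
      rw [hsum]
      refine Submodule.sum_mem _ (fun y _ => ?_)
      have heq : (fun x => (if x 0 = y then (1 : ZMod p) else 0) * R (y - c) (tailSeq x))
          = mulSeqL p (fun u => if u = y then (1 : ZMod p) else 0) (R (y - c)) := rfl
      rw [heq]
      refine map_span_mem _ (hRmem (y - c)) ?_
      rintro u ⟨l, hl, rfl⟩
      simp only [Set.mem_setOf_eq] at hl
      have heq2 : mulSeqL p (fun u => if u = y then (1 : ZMod p) else 0) (fBasis p l)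
          = fun x => (fun u => if u = y then (1 : ZMod p) else 0) (x 0) * fBasis p l (tailSeq x) := rfl
      rw [heq2]
      refine mul_fBasis_mem hp (fun u => if u = y then (1 : ZMod p) else 0) ?_
      have h6 : p * l + p ≤ p * (m - 1) := by
        have := Nat.mul_le_mul_left p (by omega : l + 1 ≤ m - 1)
        rw [Nat.mul_succ] at this
        omega
      omega
  · -- case p ∤ n
    have hr1 : 1 ≤ r := by omega
    have hv : padicValNat p n = 0 := by
      refine padicValNat.eq_zero_of_not_dvd ?_
      rw [Nat.dvd_iff_mod_eq_zero]
      omega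
    have hα : alphaKal p g 0 = c := alpha_zero hg
    have hFn : fBasis p n = fun x => bFun p r (x 0) * fBasis p m (tailSeq x) := by
      rw [← hdm]
      exact fBasis_decomp' hp hrp
    have hFn1 : fBasis p (n - 1) = fun x => bFun p (r - 1) (x 0) * fBasis p m (tailSeq x) := by
      have h4 : n - 1 = p * m + (r - 1) := by omega
      rw [h4]
      exact fBasis_decomp' hp (by omega)
    set E : ZMod p → ((ℕ → ZMod p) → ZMod p) := fun y => fun z =>
      fBasis p m ((tailPerm p g hg y).symm z) - fBasis p m z with hE
    have hEmem : ∀ y, E y ∈ Submodule.span (ZMod p) (fBasis p '' {l : ℕ | l + 1 ≤ m}) :=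
      fun y => cor m hmn _ (tailPerm_triangular hg y)
    set Wf : ZMod p → ZMod p :=
      (fun u => bFun p r (u - c)) - bFun p r - c • bFun p (r - 1) with hWf
    have hWmem : Wf ∈ Submodule.span (ZMod p) (bFun p '' {j : ℕ | j + 2 ≤ r}) :=
      bFun_translate hp hr1 (by omega) c
    have key : (fun x => fBasis p n (g.symm x) - fBasis p n x -
        alphaKal p g (padicValNat p n) * fBasis p (n - 1) x)
        = (fun x => Wf (x 0) * fBasis p m (tailSeq x))
          + (fun x => bFun p r (x 0 - c) * E (x 0 - c) (tailSeq x)) := by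
      funext x
      rw [hv, hα]
      have h1 : fBasis p n (g.symm x) = bFun p r (x 0 - c) *
          fBasis p m ((tailPerm p g hg (x 0 - c)).symm (tailSeq x)) := by
        simp only [hFn]
        rw [symm_decomp hg x, tailSeq_consSeq, consSeq_zero]
      have h2 : E (x 0 - c) (tailSeq x)
          = fBasis p m ((tailPerm p g hg (x 0 - c)).symm (tailSeq x))
            - fBasis p m (tailSeq x) := rfl
      have h3 : Wf (x 0) = bFun p r (x 0 - c) - bFun p r (x 0) - c * bFun p (r - 1) (x 0) := by
        rw [hWf, Pi.sub_apply, Pi.sub_apply, Pi.smul_apply, smul_eq_mul]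
      rw [Pi.add_apply, h2, h1]
      simp only [hFn, hFn1]
      rw [h3]
      ring
    rw [key]
    refine add_mem ?_ ?_
    · have heq : (fun x => Wf (x 0) * fBasis p m (tailSeq x)) = mulBasL p m Wf := rfl
      rw [heq]
      refine map_span_mem _ hWmem ?_
      rintro u ⟨j, hj, rfl⟩
      simp only [Set.mem_setOf_eq] at hj
      have h5 : mulBasL p m (bFun p j) = fBasis p (p * m + j) := by
        rw [fBasis_decomp' hp (by omega : j < p)]
        rfl
      rw [h5]
      refine Submodule.subset_span ⟨p * m + j, ?_, rfl⟩
      simp only [Set.mem_setOf_eq]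
      omega
    · have hsum : (fun x => bFun p r (x 0 - c) * E (x 0 - c) (tailSeq x))
          = ∑ y : ZMod p, (fun x => ((if x 0 = y then (1 : ZMod p) else 0) * bFun p r (y - c))
              * E (y - c) (tailSeq x)) := by
        funext x
        rw [Finset.sum_apply]
        simp only [ite_mul, one_mul, zero_mul]
        rw [Finset.sum_ite_eq]
        simp
      rw [hsum]
      refine Submodule.sum_mem _ (fun y _ => ?_)
      have heq : (fun x => ((if x 0 = y then (1 : ZMod p) else 0) * bFun p r (y - c))
            * E (y - c) (tailSeq x))
          = mulSeqL p (fun u => (if u = y then (1 : ZMod p) else 0) * bFun p r (y - c))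
              (E (y - c)) := rfl
      rw [heq]
      refine map_span_mem _ (hEmem (y - c)) ?_
      rintro u ⟨l, hl, rfl⟩
      simp only [Set.mem_setOf_eq] at hl
      have heq2 : mulSeqL p (fun u => (if u = y then (1 : ZMod p) else 0) * bFun p r (y - c))
            (fBasis p l)
          = fun x => (fun u => (if u = y then (1 : ZMod p) else 0) * bFun p r (y - c)) (x 0)
              * fBasis p l (tailSeq x) := rfl
      rw [heq2]
      refine mul_fBasis_mem hp
        (fun u => (if u = y then (1 : ZMod p) else 0) * bFun p r (y - c)) ?_
      have h6 : p * l + p ≤ p * m := by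
        have := Nat.mul_le_mul_left p (by omega : l + 1 ≤ m)
        rw [Nat.mul_succ] at this
        omega
      omega

end Main

/-- for `g ∈ K_p` and `n ≥ 1`, with `k = v_p(n)` the `p`-adic valuation of
`n`, the function `f_n ∘ g⁻¹ − f_n − α_k(g) · f_{n−1}` lies in the span of
`{f_0, …, f_{n−2}}`; i.e. the entries of the first superdiagonal of the uni-triangular
matrix of `g` in the basis `(f_0, f_1, …)` are `s_n = α_{v_p(n)}(g)`. -/
theorem first_diagonal (p : ℕ) (hp : p.Prime) [NeZero p]
    (g : Equiv.Perm (ℕ → ZMod p)) (hg : IsTriangular p g) (n : ℕ) (hn : 1 ≤ n) :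
    (fun x => fBasis p n (g.symm x) - fBasis p n x -
        alphaKal p g (padicValNat p n) * fBasis p (n - 1) x) ∈
      Submodule.span (ZMod p) (fBasis p '' {m : ℕ | m + 2 ≤ n}) := by
  exact main_aux p hp n hn g hg
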